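/- arXiv:1503.02216 — 2 statements merged into one kernel-verified Lean document; each statement's English description precedes it below -/
import Mathlib

section
/- Fix an index set Ω of entries and define F(W) = (1/2) ∑_{i∈Ω} (W_i − B_i)² for W in a finite-dimensional real vector space indexed by coordinates. If at each step one chooses a direction S^(k) with ‖S^(k)‖ ≤ 1 (in the Frobenius/Euclidean norm) satisfying ⟨∇F(W^(k)), S^(k)⟩ ≥ c ‖∇F(W^(k))‖ for c ∈ (0,1], and sets W^(k+1) = W^(k) + ᾱ S^(k) with ᾱ minimizing α ↦ F(W^(k) + α S^(k)), then F(W^(k+1)) ≤ (1 − c²) F(W^(k)). -/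
open scoped BigOperators

/-- Least-squares completion objective restricted to observed entries `Ω`. -/
noncomputable def lsObj {n : ℕ} (Ω : Finset (Fin n)) (B W : EuclideanSpace ℝ (Fin n)) : ℝ :=
  (1 / 2) * ∑ i ∈ Ω, (W i - B i) ^ 2

/-- Its gradient: `W_i - B_i` on `Ω`, zero elsewhere. -/
noncomputable def lsGrad {n : ℕ} (Ω : Finset (Fin n)) (B W : EuclideanSpace ℝ (Fin n)) :
    EuclideanSpace ℝ (Fin n) :=
  WithLp.toLp 2 (fun i => if i ∈ Ω then W i - B i else 0)

theorem stmt_5 {n : ℕ} (Ω : Finset (Fin n)) (B : EuclideanSpace ℝ (Fin n))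
    (c : ℝ) (hc0 : 0 < c) (hc1 : c ≤ 1)
    (W S : EuclideanSpace ℝ (Fin n)) (hS : ‖S‖ ≤ 1)
    (hsel : (inner ℝ (lsGrad Ω B W) S : ℝ) ≥ c * ‖lsGrad Ω B W‖)
    (α' : ℝ) (hopt : ∀ α : ℝ, lsObj Ω B (W + α' • S) ≤ lsObj Ω B (W + α • S)) :
    lsObj Ω B (W + α' • S) ≤ (1 - c ^ 2) * lsObj Ω B W := by
  set g := lsGrad Ω B W with hg
  set a : ℝ := ∑ i ∈ Ω, (S i) ^ 2 with ha
  set b : ℝ := inner ℝ g S with hb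
  have hb_eq : b = ∑ i ∈ Ω, (W i - B i) * S i := by
    rw [hb, PiLp.inner_apply]
    simp only [RCLike.inner_apply, conj_trivial]
    rw [← Finset.sum_subset (Finset.subset_univ Ω)
      (fun i _ hi => by simp [hg, lsGrad, hi])]
    exact Finset.sum_congr rfl (fun i hi => by simp [hg, lsGrad, hi, mul_comm])
  have hgg : ‖g‖ ^ 2 = ∑ i ∈ Ω, (W i - B i) ^ 2 := by
    rw [← real_inner_self_eq_norm_sq, PiLp.inner_apply]
    simp only [RCLike.inner_apply, conj_trivial]
    rw [← Finset.sum_subset (Finset.subset_univ Ω)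
      (fun i _ hi => by simp [hg, lsGrad, hi])]
    exact Finset.sum_congr rfl (fun i hi => by simp [hg, lsGrad, hi, sq])
  have ha_le : a ≤ 1 := by
    have h1 : a ≤ ‖S‖ ^ 2 := by
      rw [← real_inner_self_eq_norm_sq, PiLp.inner_apply]
      simp only [RCLike.inner_apply, conj_trivial]
      calc a = ∑ i ∈ Ω, S i * S i := by
              exact Finset.sum_congr rfl (fun i _ => sq (S i))
        _ ≤ ∑ i, S i * S i := Finset.sum_le_sum_of_subset_of_nonneg
              (Finset.subset_univ Ω) (fun i _ _ => mul_self_nonneg _)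
    nlinarith [norm_nonneg S]
  have ha0 : 0 ≤ a := Finset.sum_nonneg fun i _ => sq_nonneg _
  have hF0 : 0 ≤ lsObj Ω B W := by
    unfold lsObj
    positivity
  have expand : ∀ α : ℝ, lsObj Ω B (W + α • S)
      = lsObj Ω B W + α * b + α ^ 2 / 2 * a := by
    intro α
    unfold lsObj
    simp only [PiLp.add_apply, PiLp.smul_apply, smul_eq_mul]
    rw [hb_eq, ha]
    rw [Finset.sum_congr rfl (fun i (_ : i ∈ Ω) =>
      show (W i + α * S i - B i) ^ 2
        = (W i - B i) ^ 2 + (2 * α) * ((W i - B i) * S i) + α ^ 2 * (S i) ^ 2 by ring)]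
    rw [Finset.sum_add_distrib, Finset.sum_add_distrib, ← Finset.mul_sum, ← Finset.mul_sum]
    ring
  have hFW : ‖g‖ ^ 2 = 2 * lsObj Ω B W := by
    rw [hgg]; unfold lsObj; ring
  by_cases haz : a = 0
  · -- degenerate case: S vanishes on Ω
    have hSz : ∀ i ∈ Ω, S i = 0 := by
      intro i hi
      have := (Finset.sum_eq_zero_iff_of_nonneg (fun j _ => sq_nonneg (S j))).mp
        (by rw [← ha, haz]) i hi
      exact pow_eq_zero_iff (by norm_num) |>.mp this
    have hbz : b = 0 := by
      rw [hb_eq]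
      exact Finset.sum_eq_zero fun i hi => by rw [hSz i hi, mul_zero]
    have hgz : ‖g‖ = 0 := by
      have : c * ‖g‖ ≤ 0 := by rw [← hbz]; exact hsel
      nlinarith [norm_nonneg g]
    have hFz : lsObj Ω B W = 0 := by nlinarith [hFW, hgz]
    have := hopt 0
    rw [expand 0, hFz] at this
    nlinarith [hc0, hc1]
  · have hapos : 0 < a := lt_of_le_of_ne ha0 (Ne.symm haz)
    have key := hopt (-b / a)
    rw [expand (-b / a)] at key
    have hval : lsObj Ω B W + (-b / a) * b + (-b / a) ^ 2 / 2 * a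
        = lsObj Ω B W - b ^ 2 / (2 * a) := by
      field_simp
      ring
    rw [hval] at key
    have hbge : b ≥ c * ‖g‖ := hsel
    have hgn : 0 ≤ ‖g‖ := norm_nonneg g
    have hbnn : 0 ≤ b := le_trans (mul_nonneg hc0.le hgn) hbge
    have hbsq : c ^ 2 * ‖g‖ ^ 2 ≤ b ^ 2 := by nlinarith [mul_nonneg hc0.le hgn, sq_nonneg (b - c * ‖g‖)]
    -- c² F(W) ≤ b²/(2a)
    have hfinal : c ^ 2 * lsObj Ω B W ≤ b ^ 2 / (2 * a) := by
      rw [le_div_iff₀ (by linarith)]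
      have heq : c ^ 2 * lsObj Ω B W * (2 * a) = c ^ 2 * ‖g‖ ^ 2 * a := by
        rw [hFW]; ring
      have hmono : c ^ 2 * ‖g‖ ^ 2 * a ≤ c ^ 2 * ‖g‖ ^ 2 * 1 :=
        mul_le_mul_of_nonneg_left ha_le (mul_nonneg (sq_nonneg c) (sq_nonneg ‖g‖))
      linarith
    linarith
end

section
/- For a 4th-order tensor A with all mode dimensions equal to n, if x₁,…,x₄ are the unit vectors produced by the recursive spectral approximation (with exact leading singular vector computations at each step, i.e., all α_{(k)} = 1), then ⟨A, x₁⊗x₂⊗x₃⊗x₄⟩ ≥ ‖A_{(1,2)}‖₂ / n ≥ ‖A‖₂ / n, where A_{(1,2)} is the n²×n² mode-(1,2) unfolding and ‖A‖₂ = max_{‖x_i‖=1} ⟨A, x₁⊗x₂⊗x₃⊗x₄⟩. -/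
open scoped BigOperators

set_option maxHeartbeats 1000000

lemma sum_swap4 {α : Type*} [AddCommMonoid α] {n : ℕ} (f : Fin n → Fin n → Fin n → Fin n → α) :
    ∑ k, ∑ l, ∑ i, ∑ j, f i j k l = ∑ i, ∑ j, ∑ k, ∑ l, f i j k l := by
  calc ∑ k, ∑ l, ∑ i, ∑ j, f i j k l
      = ∑ k, ∑ i, ∑ l, ∑ j, f i j k l :=
        Finset.sum_congr rfl fun k _ => Finset.sum_comm
    _ = ∑ i, ∑ k, ∑ l, ∑ j, f i j k l := Finset.sum_comm
    _ = ∑ i, ∑ k, ∑ j, ∑ l, f i j k l :=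
        Finset.sum_congr rfl fun i _ =>
          Finset.sum_congr rfl fun k _ => Finset.sum_comm
    _ = ∑ i, ∑ j, ∑ k, ∑ l, f i j k l :=
        Finset.sum_congr rfl fun i _ => Finset.sum_comm

lemma row_bound {n : ℕ} (hn : 0 < n) (M : Fin n → Fin n → ℝ) (τ : ℝ)
    (hub : ∀ a b : Fin n → ℝ, (∑ i, a i ^ 2) = 1 → (∑ j, b j ^ 2) = 1 →
      (∑ k, ∑ l, M k l * a k * b l) ≤ τ) :
    0 ≤ τ ∧ ∀ k, (∑ l, M k l ^ 2) ≤ τ ^ 2 := by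
  have k₀ : Fin n := ⟨0, hn⟩
  set e : Fin n → ℝ := fun i => if i = k₀ then 1 else 0 with he
  have heu : (∑ i, e i ^ 2) = 1 := by simp [he]
  have hτ0 : 0 ≤ τ := by
    have h1 := hub e e heu heu
    have h2 := hub e (fun l => -(e l)) heu (by simpa using heu)
    have : (∑ k, ∑ l, M k l * e k * (fun l => -(e l)) l)
        = -(∑ k, ∑ l, M k l * e k * e l) := by
      simp [mul_neg, Finset.sum_neg_distrib]
    rw [this] at h2
    linarith
  refine ⟨hτ0, fun k₁ => ?_⟩
  set R := ∑ l, M k₁ l ^ 2 with hR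
  have hR0 : 0 ≤ R := Finset.sum_nonneg fun _ _ => sq_nonneg _
  rcases eq_or_lt_of_le hR0 with h | h
  · nlinarith
  · set r := Real.sqrt R with hr
    have hr0 : 0 < r := Real.sqrt_pos.2 h
    have hr2 : r ^ 2 = R := Real.sq_sqrt hR0
    set a : Fin n → ℝ := fun i => if i = k₁ then 1 else 0 with ha
    set b : Fin n → ℝ := fun l => M k₁ l / r with hb
    have hau : (∑ i, a i ^ 2) = 1 := by simp [ha]
    have hbu : (∑ l, b l ^ 2) = 1 := by
      simp only [hb, div_pow, ← Finset.sum_div, ← hR, hr2.symm]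
      field_simp
    have hval : (∑ k, ∑ l, M k l * a k * b l) = r := by
      have : ∀ k, (∑ l, M k l * a k * b l)
          = if k = k₁ then ∑ l, M k l * b l else 0 := by
        intro k
        by_cases hk : k = k₁ <;> simp [ha, hk]
      rw [Finset.sum_congr rfl fun k _ => this k, Finset.sum_ite_eq' Finset.univ k₁]
      simp only [Finset.mem_univ, if_true, hb]
      rw [show (∑ l, M k₁ l * (M k₁ l / r)) = (∑ l, M k₁ l ^ 2) / r by
        rw [Finset.sum_div]; exact Finset.sum_congr rfl fun l _ => by ring]
      rw [← hR, ← hr2]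
      field_simp
    have := hub a b hau hbu
    rw [hval] at this
    calc R = r ^ 2 := hr2.symm
      _ ≤ τ ^ 2 := by nlinarith


/-- `⟨A, x₁ ⊗ x₂ ⊗ x₃ ⊗ x₄⟩` for a fourth-order tensor. -/
def val4 {n : ℕ} (A : Fin n → Fin n → Fin n → Fin n → ℝ)
    (x₁ x₂ x₃ x₄ : Fin n → ℝ) : ℝ :=
  ∑ i, ∑ j, ∑ k, ∑ l, A i j k l * x₁ i * x₂ j * x₃ k * x₄ l

theorem stmt_17 {n : ℕ} (hn : 0 < n) (A : Fin n → Fin n → Fin n → Fin n → ℝ)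
    (σ : ℝ) (u v : Fin n → Fin n → ℝ) (x₁ x₂ x₃ x₄ : Fin n → ℝ)
    -- σ is the spectral norm of the mode-(1,2) unfolding `A_{(1,2)}` ...
    (hσmax : IsGreatest {w : ℝ | ∃ U V : Fin n → Fin n → ℝ,
        (∑ i, ∑ j, U i j ^ 2) = 1 ∧ (∑ k, ∑ l, V k l ^ 2) = 1 ∧
        w = ∑ i, ∑ j, ∑ k, ∑ l, A i j k l * U i j * V k l} σ)
    -- ... with leading singular vector pair (u, v): `A_{(1,2)} v = σ u`
    (hu : (∑ i, ∑ j, u i j ^ 2) = 1) (hv : (∑ k, ∑ l, v k l ^ 2) = 1)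
    (hAv : ∀ i j, (∑ k, ∑ l, A i j k l * v k l) = σ * u i j)
    -- (x₁, x₂) is the leading singular vector pair of the folded matrix u
    (hx₁ : (∑ i, x₁ i ^ 2) = 1) (hx₂ : (∑ j, x₂ j ^ 2) = 1)
    (hx₁₂ : IsGreatest {w : ℝ | ∃ a b : Fin n → ℝ,
        (∑ i, a i ^ 2) = 1 ∧ (∑ j, b j ^ 2) = 1 ∧
        w = ∑ i, ∑ j, u i j * a i * b j} (∑ i, ∑ j, u i j * x₁ i * x₂ j))
    -- (x₃, x₄) is the leading singular vector pair of `A ×₁ x₁ᵀ ×₂ x₂ᵀ`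
    (hx₃ : (∑ k, x₃ k ^ 2) = 1) (hx₄ : (∑ l, x₄ l ^ 2) = 1)
    (hx₃₄ : IsGreatest {w : ℝ | ∃ a b : Fin n → ℝ,
        (∑ k, a k ^ 2) = 1 ∧ (∑ l, b l ^ 2) = 1 ∧
        w = ∑ k, ∑ l, (∑ i, ∑ j, A i j k l * x₁ i * x₂ j) * a k * b l}
        (∑ k, ∑ l, (∑ i, ∑ j, A i j k l * x₁ i * x₂ j) * x₃ k * x₄ l)) :
    val4 A x₁ x₂ x₃ x₄ ≥ σ / n ∧
    σ ≥ sSup {w : ℝ | ∃ y₁ y₂ y₃ y₄ : Fin n → ℝ,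
        (∑ i, y₁ i ^ 2) = 1 ∧ (∑ j, y₂ j ^ 2) = 1 ∧
        (∑ k, y₃ k ^ 2) = 1 ∧ (∑ l, y₄ l ^ 2) = 1 ∧
        w = val4 A y₁ y₂ y₃ y₄} := by
  have hn1 : (1 : ℝ) ≤ n := by exact_mod_cast hn
  have hnpos : (0 : ℝ) < n := by exact_mod_cast hn
  -- σ ≥ 0
  have hσ0 : 0 ≤ σ := by
    obtain ⟨U, V, hU, hV, hw⟩ := hσmax.1
    have hmem : (-σ) ∈ {w : ℝ | ∃ U V : Fin n → Fin n → ℝ,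
        (∑ i, ∑ j, U i j ^ 2) = 1 ∧ (∑ k, ∑ l, V k l ^ 2) = 1 ∧
        w = ∑ i, ∑ j, ∑ k, ∑ l, A i j k l * U i j * V k l} := by
      refine ⟨fun i j => -(U i j), V, by simpa using hU, hV, ?_⟩
      rw [hw]
      simp [mul_neg, neg_mul, Finset.sum_neg_distrib]
    have := hσmax.2 hmem
    linarith
  -- notations
  set M : Fin n → Fin n → ℝ := fun k l => ∑ i, ∑ j, A i j k l * x₁ i * x₂ j with hM
  set τ : ℝ := ∑ k, ∑ l, M k l * x₃ k * x₄ l with hτ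
  set s : ℝ := ∑ i, ∑ j, u i j * x₁ i * x₂ j with hs
  clear_value M τ s
  have hubM : ∀ a b : Fin n → ℝ, (∑ i, a i ^ 2) = 1 → (∑ j, b j ^ 2) = 1 →
      (∑ k, ∑ l, M k l * a k * b l) ≤ τ := fun a b ha hb => hx₃₄.2 ⟨a, b, ha, hb, by simp only [hM]⟩
  have hubu : ∀ a b : Fin n → ℝ, (∑ i, a i ^ 2) = 1 → (∑ j, b j ^ 2) = 1 →
      (∑ k, ∑ l, u k l * a k * b l) ≤ s := fun a b ha hb => hx₁₂.2 ⟨a, b, ha, hb, rfl⟩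
  obtain ⟨hτ0, hrowM⟩ := row_bound hn M τ hubM
  obtain ⟨hs0, hrowu⟩ := row_bound hn u s hubu
  -- s^2 ≥ 1/n
  have : Nonempty (Fin n) := ⟨⟨0, hn⟩⟩
  have hsn : 1 / (n : ℝ) ≤ s ^ 2 := by
    obtain ⟨k₁, _, hk₁⟩ := Finset.exists_le_of_sum_le (f := fun _ : Fin n => 1 / (n : ℝ))
      (g := fun k => ∑ j, u k j ^ 2) Finset.univ_nonempty
      (by rw [hu]; simp [Finset.sum_const, Finset.card_univ]; field_simp; exact le_rfl)
    exact hk₁.trans (hrowu k₁)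
  -- ⟨M, v⟩ = σ * s
  have hMv : (∑ k, ∑ l, M k l * v k l) = σ * s := by
    have h1 : (∑ k, ∑ l, M k l * v k l)
        = ∑ k, ∑ l, ∑ i, ∑ j, A i j k l * x₁ i * x₂ j * v k l := by
      refine Finset.sum_congr rfl fun k _ => Finset.sum_congr rfl fun l _ => ?_
      rw [hM]
      simp [Finset.sum_mul]
    rw [h1, sum_swap4]
    have h2 : ∀ i j, (∑ k, ∑ l, A i j k l * x₁ i * x₂ j * v k l)
        = σ * u i j * (x₁ i * x₂ j) := by
      intro i j
      have : (∑ k, ∑ l, A i j k l * x₁ i * x₂ j * v k l)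
          = (∑ k, ∑ l, A i j k l * v k l) * (x₁ i * x₂ j) := by
        rw [Finset.sum_mul]
        refine Finset.sum_congr rfl fun k _ => ?_
        rw [Finset.sum_mul]
        exact Finset.sum_congr rfl fun l _ => by ring
      rw [this, hAv]
    rw [Finset.sum_congr rfl fun i _ => Finset.sum_congr rfl fun j _ => h2 i j]
    rw [hs, Finset.mul_sum]
    refine Finset.sum_congr rfl fun i _ => ?_
    rw [Finset.mul_sum]
    exact Finset.sum_congr rfl fun j _ => by ring
  -- σ * s ≤ ∑ rk * wk, squared bound
  have hcs : σ * s ≤ ∑ k, Real.sqrt (∑ l, M k l ^ 2) * Real.sqrt (∑ l, v k l ^ 2) := by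
    rw [← hMv]
    exact Finset.sum_le_sum fun k _ => Real.sum_mul_le_sqrt_mul_sqrt _ _ _
  have hσs0 : 0 ≤ σ * s := mul_nonneg hσ0 hs0
  have hsq : (σ * s) ^ 2 ≤ (n : ℝ) * τ ^ 2 := by
    have h3 := Finset.sum_mul_sq_le_sq_mul_sq Finset.univ
      (fun k => Real.sqrt (∑ l, M k l ^ 2)) (fun k => Real.sqrt (∑ l, v k l ^ 2))
    have hsimp1 : (∑ k, Real.sqrt (∑ l, M k l ^ 2) ^ 2) ≤ (n : ℝ) * τ ^ 2 := by
      have : ∀ k : Fin n, Real.sqrt (∑ l, M k l ^ 2) ^ 2 = ∑ l, M k l ^ 2 := fun k =>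
        Real.sq_sqrt (Finset.sum_nonneg fun _ _ => sq_nonneg _)
      rw [Finset.sum_congr rfl fun k _ => this k]
      calc (∑ k, ∑ l, M k l ^ 2) ≤ ∑ _k : Fin n, τ ^ 2 :=
            Finset.sum_le_sum fun k _ => hrowM k
        _ = (n : ℝ) * τ ^ 2 := by simp [Finset.sum_const, Finset.card_univ, nsmul_eq_mul]
    have hsimp2 : (∑ k, Real.sqrt (∑ l, v k l ^ 2) ^ 2) = 1 := by
      have : ∀ k : Fin n, Real.sqrt (∑ l, v k l ^ 2) ^ 2 = ∑ l, v k l ^ 2 := fun k =>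
        Real.sq_sqrt (Finset.sum_nonneg fun _ _ => sq_nonneg _)
      rw [Finset.sum_congr rfl fun k _ => this k, hv]
    have h4 : (∑ k, Real.sqrt (∑ l, M k l ^ 2) * Real.sqrt (∑ l, v k l ^ 2)) ^ 2
        ≤ (n : ℝ) * τ ^ 2 := by
      calc _ ≤ (∑ k, Real.sqrt (∑ l, M k l ^ 2) ^ 2) * (∑ k, Real.sqrt (∑ l, v k l ^ 2) ^ 2) := h3
        _ ≤ ((n : ℝ) * τ ^ 2) * 1 := by
            rw [hsimp2]
            exact mul_le_mul_of_nonneg_right hsimp1 zero_le_one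
        _ = (n : ℝ) * τ ^ 2 := by ring
    have h5 : 0 ≤ ∑ k, Real.sqrt (∑ l, M k l ^ 2) * Real.sqrt (∑ l, v k l ^ 2) :=
      Finset.sum_nonneg fun k _ => mul_nonneg (Real.sqrt_nonneg _) (Real.sqrt_nonneg _)
    nlinarith
  -- conclude τ ≥ σ / n
  have hτσ : σ / n ≤ τ := by
    have hσ2 : σ ^ 2 * (1 / (n : ℝ)) ≤ (σ * s) ^ 2 := by
      have : (σ * s) ^ 2 = σ ^ 2 * s ^ 2 := by ring
      rw [this]
      exact mul_le_mul_of_nonneg_left hsn (sq_nonneg σ)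
    have hfin : σ ^ 2 ≤ ((n : ℝ) * τ) ^ 2 := by
      have h6 : σ ^ 2 * (1 / (n : ℝ)) ≤ (n : ℝ) * τ ^ 2 := le_trans hσ2 hsq
      have h8 := mul_le_mul_of_nonneg_right h6 hnpos.le
      have h7 : σ ^ 2 ≤ (n : ℝ) * τ ^ 2 * n := by
        calc σ ^ 2 = σ ^ 2 * (1 / (n : ℝ)) * n := by field_simp
          _ ≤ _ := h8
      nlinarith
    have hle : σ ≤ (n : ℝ) * τ := by
      have h9 := Real.sqrt_le_sqrt hfin
      rwa [Real.sqrt_sq hσ0, Real.sqrt_sq (mul_nonneg hnpos.le hτ0)] at h9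
    rw [div_le_iff₀ hnpos]
    linarith
  -- val4 = τ
  have hval : val4 A x₁ x₂ x₃ x₄ = τ := by
    rw [hτ]
    have : ∀ k l, M k l * x₃ k * x₄ l = ∑ i, ∑ j, A i j k l * x₁ i * x₂ j * x₃ k * x₄ l := by
      intro k l
      rw [hM, Finset.sum_mul, Finset.sum_mul]
      refine Finset.sum_congr rfl fun i _ => ?_
      rw [Finset.sum_mul, Finset.sum_mul]
    rw [Finset.sum_congr rfl fun k _ => Finset.sum_congr rfl fun l _ => this k l, sum_swap4]
    rfl
  constructor
  · rw [hval]; exact hτσ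
  · refine Real.sSup_le (fun w hw => ?_) hσ0
    obtain ⟨y₁, y₂, y₃, y₄, h1, h2, h3, h4, rfl⟩ := hw
    refine hσmax.2 ⟨fun i j => y₁ i * y₂ j, fun k l => y₃ k * y₄ l, ?_, ?_, ?_⟩
    · simp only [mul_pow, ← Finset.mul_sum, h2, mul_one]
      exact h1
    · simp only [mul_pow, ← Finset.mul_sum, h4, mul_one]
      exact h3
    · unfold val4
      refine Finset.sum_congr rfl fun i _ => Finset.sum_congr rfl fun j _ =>
        Finset.sum_congr rfl fun k _ => Finset.sum_congr rfl fun l _ => by ring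
end
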